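/- Let ψ be an AME(n,d) state of minimal support, so ψ(s) = e^{iθ(s)}·r(s) with r(s) ≥ 0 on its support. Then for any function θ' assigning real phases to configurations, the state φ defined by φ(s) = e^{iθ'(s)}·|ψ(s)| is also an AME(n,d) state of minimal support. -/

import Mathlib

open scoped BigOperators Classical

noncomputable section

namespace AMEPaper

/-- Combine a configuration on the complement of `B` with a configuration on `B`
into a full configuration on `Fin n`. -/
def combine {n d : ℕ} (B : Finset (Fin n)) (a : {i : Fin n // i ∉ B} → Fin d)
    (b : {i : Fin n // i ∈ B} → Fin d) : Fin n → Fin d :=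
  fun i => if h : i ∈ B then b ⟨i, h⟩ else a ⟨i, h⟩

/-- `ψ` is an absolutely maximally entangled state with `n` sites and local dimension `d`:
it is a unit vector and, for every set `B` of at most `n/2` sites, the reduced density
matrix on `B` equals `d ^ (-|B|)` times the identity. -/
def IsAME (n d : ℕ) (ψ : (Fin n → Fin d) → ℂ) : Prop :=
  (∑ s : Fin n → Fin d, ‖ψ s‖ ^ 2 = 1) ∧
  ∀ B : Finset (Fin n), B.card ≤ n / 2 →
    ∀ b b' : {i : Fin n // i ∈ B} → Fin d,
      (∑ a : {i : Fin n // i ∉ B} → Fin d,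
          ψ (combine B a b) * (starRingEnd ℂ) (ψ (combine B a b'))) =
        if b = b' then ((d : ℂ) ^ B.card)⁻¹ else 0

/-- `ψ` has minimal support: its support in the computational basis has exactly
`d ^ ⌊n/2⌋` elements. -/
def HasMinimalSupport (n d : ℕ) (ψ : (Fin n → Fin d) → ℂ) : Prop :=
  {s : Fin n → Fin d | ψ s ≠ 0}.ncard = d ^ (n / 2)

/-- `C` is an MDS code over the alphabet `Fin d` with wordlength `n` and minimum
Hamming distance `δ`: its minimum distance is exactly `δ` and it meets the Singleton
bound, `|C| = d ^ (n - δ + 1)`. -/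
def IsMDSCode (d n δ : ℕ) (C : Finset (Fin n → Fin d)) : Prop :=
  C.card = d ^ (n - δ + 1) ∧
  (∀ w ∈ C, ∀ w' ∈ C, w ≠ w' → δ ≤ hammingDist w w') ∧
  (∃ w ∈ C, ∃ w' ∈ C, w ≠ w' ∧ hammingDist w w' = δ)

/-- A latin `k`-hypercube of order `d`: fixing all indices but any one of them, the
resulting map `Fin d → Fin d` is a bijection. -/
def IsLatinHypercube (k d : ℕ) (L : (Fin k → Fin d) → Fin d) : Prop :=
  ∀ (i : Fin k) (x : Fin k → Fin d),
    Function.Bijective fun v : Fin d => L (Function.update x i v)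

/-- Two latin `k`-hypercubes are orthogonal if for every pair of distinct indices and
all ways of fixing the remaining indices, the two resulting latin squares are
orthogonal. -/
def AreOrthogonalHypercubes (k d : ℕ) (L M : (Fin k → Fin d) → Fin d) : Prop :=
  ∀ (i j : Fin k), i ≠ j → ∀ x : Fin k → Fin d,
    Function.Injective fun p : Fin d × Fin d =>
      (L (Function.update (Function.update x i p.1) j p.2),
       M (Function.update (Function.update x i p.1) j p.2))

/-- A latin square of order `d`: every row and every column is a bijection. -/
def IsLatinSquare (d : ℕ) (L : Fin d × Fin d → Fin d) : Prop :=
  (∀ i : Fin d, Function.Bijective fun j => L (i, j)) ∧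
  (∀ j : Fin d, Function.Bijective fun i => L (i, j))

lemma combine_mem {n d : ℕ} (B : Finset (Fin n)) (a : {i : Fin n // i ∉ B} → Fin d)
    (b : {i : Fin n // i ∈ B} → Fin d) {i : Fin n} (h : i ∈ B) :
    combine B a b i = b ⟨i, h⟩ := dif_pos h

lemma combine_not_mem {n d : ℕ} (B : Finset (Fin n)) (a : {i : Fin n // i ∉ B} → Fin d)
    (b : {i : Fin n // i ∈ B} → Fin d) {i : Fin n} (h : i ∉ B) :
    combine B a b i = a ⟨i, h⟩ := dif_neg h

/-- Restriction to any set of `⌊n/2⌋` coordinates is injective on the support. -/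
lemma support_restrict_inj (n d : ℕ) (hd : 2 ≤ d)
    (ψ : (Fin n → Fin d) → ℂ) (hψ : IsAME n d ψ) (hmin : HasMinimalSupport n d ψ)
    (B' : Finset (Fin n)) (hB' : B'.card = n / 2) :
    ∀ s t : Fin n → Fin d, ψ s ≠ 0 → ψ t ≠ 0 →
      (∀ i ∈ B', s i = t i) → s = t := by
  classical
  set S : Set (Fin n → Fin d) := {s | ψ s ≠ 0} with hS
  have hfin : S.Finite := Set.toFinite _
  haveI : Fintype S := hfin.fintype
  have hcardS : Fintype.card S = d ^ (n / 2) := by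
    have := hmin
    unfold HasMinimalSupport at this
    rw [← hS, Set.ncard_eq_toFinset_card' S, Set.toFinset_card] at this
    exact this
  -- restriction map
  let f : S → ({i : Fin n // i ∈ B'} → Fin d) := fun s i => s.1 i.1
  have hsurj : Function.Surjective f := by
    intro b
    have h := hψ.2 B' (le_of_eq hB') b b
    rw [if_pos rfl] at h
    have hne : (∑ a : {i : Fin n // i ∉ B'} → Fin d,
        ψ (combine B' a b) * (starRingEnd ℂ) (ψ (combine B' a b))) ≠ 0 := by
      rw [h]
      apply inv_ne_zero
      apply pow_ne_zero
      exact_mod_cast (by omega : d ≠ 0)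
    obtain ⟨a, -, ha⟩ := Finset.exists_ne_zero_of_sum_ne_zero hne
    have hψa : ψ (combine B' a b) ≠ 0 := fun h0 => ha (by rw [h0]; ring)
    refine ⟨⟨combine B' a b, hψa⟩, ?_⟩
    funext i
    show combine B' a b i.1 = b i
    rw [combine_mem B' a b i.2]
  have hcard : Fintype.card S = Fintype.card ({i : Fin n // i ∈ B'} → Fin d) := by
    rw [hcardS, Fintype.card_fun, Fintype.card_coe, Fintype.card_fin, hB']
  have hinj : Function.Injective f :=
    ((Fintype.bijective_iff_surjective_and_card f).mpr ⟨hsurj, hcard⟩).1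
  intro s t hs ht hag
  have : f ⟨s, hs⟩ = f ⟨t, ht⟩ := by
    funext i; exact hag i.1 i.2
  exact congrArg Subtype.val (hinj this)

/-- Two support elements agreeing outside a small set are equal. -/
lemma support_sep (n d : ℕ) (hd : 2 ≤ d)
    (ψ : (Fin n → Fin d) → ℂ) (hψ : IsAME n d ψ) (hmin : HasMinimalSupport n d ψ)
    (B : Finset (Fin n)) (hB : B.card ≤ n / 2)
    (s t : Fin n → Fin d) (hs : ψ s ≠ 0) (ht : ψ t ≠ 0)
    (hag : ∀ i ∉ B, s i = t i) : s = t := by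
  classical
  have hcompl : n / 2 ≤ Bᶜ.card := by
    rw [Finset.card_compl, Fintype.card_fin]; omega
  obtain ⟨B', hsub, hcard⟩ := Finset.exists_subset_card_eq hcompl
  refine support_restrict_inj n d hd ψ hψ hmin B' hcard s t hs ht ?_
  intro i hi
  exact hag i (Finset.mem_compl.mp (hsub hi))

/-- Changing the phases of a minimally supported AME state yields again a minimally
supported AME state. -/
theorem phase_change (n d : ℕ) (hn : 2 ≤ n) (hd : 2 ≤ d)
    (ψ : (Fin n → Fin d) → ℂ) (hψ : IsAME n d ψ) (hmin : HasMinimalSupport n d ψ)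
    (θ' : (Fin n → Fin d) → ℝ) (φ : (Fin n → Fin d) → ℂ)
    (hφ : ∀ s, φ s = Complex.exp (Complex.I * θ' s) * (‖ψ s‖ : ℂ)) :
    IsAME n d φ ∧ HasMinimalSupport n d φ := by
  classical
  have hnorm : ∀ s, ‖φ s‖ = ‖ψ s‖ := by
    intro s
    rw [hφ s, norm_mul, Complex.norm_exp]
    simp [Complex.mul_re]
  have hzero : ∀ s, φ s = 0 ↔ ψ s = 0 := by
    intro s
    constructor
    · intro h
      have := hnorm s
      rw [h, norm_zero] at this
      exact norm_eq_zero.mp this.symm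
    · intro h
      rw [hφ s, h]
      simp
  refine ⟨⟨?_, ?_⟩, ?_⟩
  · calc ∑ s : Fin n → Fin d, ‖φ s‖ ^ 2
        = ∑ s : Fin n → Fin d, ‖ψ s‖ ^ 2 := by
          exact Finset.sum_congr rfl fun s _ => by rw [hnorm s]
      _ = 1 := hψ.1
  · intro B hB b b'
    by_cases hbb : b = b'
    · subst hbb
      rw [if_pos rfl]
      have h := hψ.2 B hB b b
      rw [if_pos rfl] at h
      rw [← h]
      refine Finset.sum_congr rfl fun a _ => ?_
      rw [Complex.mul_conj, Complex.mul_conj]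
      congr 1
      rw [Complex.normSq_eq_norm_sq, Complex.normSq_eq_norm_sq, hnorm]
    · rw [if_neg hbb]
      refine Finset.sum_eq_zero fun a _ => ?_
      by_contra hterm
      have h1 : φ (combine B a b) ≠ 0 := fun h => hterm (by rw [h]; ring)
      have h2 : φ (combine B a b') ≠ 0 := by
        intro h
        apply hterm
        rw [h]
        simp
      have hψ1 : ψ (combine B a b) ≠ 0 := fun h => h1 ((hzero _).mpr h)
      have hψ2 : ψ (combine B a b') ≠ 0 := fun h => h2 ((hzero _).mpr h)
      have heq : combine B a b = combine B a b' := by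
        refine support_sep n d hd ψ hψ hmin B hB _ _ hψ1 hψ2 ?_
        intro i hi
        rw [combine_not_mem B a b hi, combine_not_mem B a b' hi]
      apply hbb
      funext i
      have := congrFun heq i.1
      rwa [combine_mem B a b i.2, combine_mem B a b' i.2] at this
  · unfold HasMinimalSupport at hmin ⊢
    have : {s : Fin n → Fin d | φ s ≠ 0} = {s : Fin n → Fin d | ψ s ≠ 0} := by
      ext s
      simp only [Set.mem_setOf_eq, not_iff_not]
      exact hzero s
    rw [this]
    exact hmin

end AMEPaper
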